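/- arXiv:2002.00503 — 2 statements merged into one kernel-verified Lean document; each statement's English description precedes it below -/
import Mathlib

section
/- For every real number t in the open interval I = (θ, −13), one has 3(506 + 75t − t^3) > 0 and q5(t) < 0, and the three quotients (pa1(t) + pa2(t)·ω(t))/q5(t), (pb1(t) + pb2(t)·ω(t))/q5(t) and (ps1(t) + ps2(t)·ω(t))/q5(t) are all strictly positive; consequently α(t), β(t) and s(t) are well-defined positive real numbers. -/
noncomputable section

/-- ω(t) = √(3(506 + 75t − t³)) -/
def ω (t : ℝ) : ℝ := Real.sqrt (3 * (506 + 75 * t - t ^ 3))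

def q5 (t : ℝ) : ℝ := (t - 11) ^ 2 * (13 + t) ^ 5 * (-1763 + 75 * t + 111 * t ^ 2 + t ^ 3)

def pa1 (t : ℝ) : ℝ :=
  -78915159455 - 11841667910 * t + 6656486445 * t ^ 2 + 1445318328 * t ^ 3 -
    98097774 * t ^ 4 - 45176292 * t ^ 5 - 1757742 * t ^ 6 + 383160 * t ^ 7 +
    20493 * t ^ 8 - 1094 * t ^ 9 + t ^ 10

def pa2 (t : ℝ) : ℝ :=
  -32 * (-237047 - 688048 * t - 631196 * t ^ 2 - 136576 * t ^ 3 + 52510 * t ^ 4 +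
    7760 * t ^ 5 - 1292 * t ^ 6 - 160 * t ^ 7 + t ^ 8)

def pb1 (t : ℝ) : ℝ :=
  -83889211967 - 23402064230 * t - 1593364563 * t ^ 2 - 238787016 * t ^ 3 -
    84657966 * t ^ 4 - 8058276 * t ^ 5 + 964434 * t ^ 6 + 8760 * t ^ 7 +
    5229 * t ^ 8 + 154 * t ^ 9 + t ^ 10

def pb2 (t : ℝ) : ℝ :=
  55296 * (2153 + 4729 * t + 3002 * t ^ 2 + 434 * t ^ 3 + 13 * t ^ 4 + 5 * t ^ 5)

def ps1 (t : ℝ) : ℝ :=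
  -430297163879 - 140961934838 * t - 23363774235 * t ^ 2 - 3595306632 * t ^ 3 -
    594107646 * t ^ 4 - 113195268 * t ^ 5 - 1046526 * t ^ 6 + 1347960 * t ^ 7 +
    171621 * t ^ 8 - 10742 * t ^ 9 + 25 * t ^ 10

def ps2 (t : ℝ) : ℝ :=
  -96 * (-94197721 - 28304354 * t - 6941146 * t ^ 2 - 1190186 * t ^ 3 - 19228 * t ^ 4 +
    154 * t ^ 5 - 310 * t ^ 6 - 398 * t ^ 7 + 5 * t ^ 8)

def α (t : ℝ) : ℝ := Real.sqrt ((pa1 t + pa2 t * ω t) / q5 t)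

def β (t : ℝ) : ℝ := Real.sqrt ((pb1 t + pb2 t * ω t) / q5 t)

def s (t : ℝ) : ℝ := (1 / 7) * Real.sqrt ((ps1 t + ps2 t * ω t) / q5 t)

set_option maxHeartbeats 2000000 in
/-- for every t in I = (θ, −13), where θ is the smallest real root of
x³ + 27x² − 93x − 1847, the radicand of ω is positive, q5(t) is negative, the three
quotients defining α, β, s are strictly positive, and hence α(t), β(t), s(t) are
well-defined positive real numbers. -/
theorem stmt0 (θ : ℝ)
    (hθroot : θ ^ 3 + 27 * θ ^ 2 - 93 * θ - 1847 = 0)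
    (hθmin : ∀ x : ℝ, x ^ 3 + 27 * x ^ 2 - 93 * x - 1847 = 0 → θ ≤ x) :
    ∀ t ∈ Set.Ioo θ (-13 : ℝ),
      3 * (506 + 75 * t - t ^ 3) > 0 ∧
      q5 t < 0 ∧
      (pa1 t + pa2 t * ω t) / q5 t > 0 ∧
      (pb1 t + pb2 t * ω t) / q5 t > 0 ∧
      (ps1 t + ps2 t * ω t) / q5 t > 0 ∧
      0 < α t ∧ 0 < β t ∧ 0 < s t := by
  intro t ht
  obtain ⟨htθ, ht13⟩ := ht
  have hθ28 : (-28:ℝ) < θ := by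
    by_contra hcon
    push_neg at hcon
    have h65 : (0:ℝ) ≤ θ^2 - θ - 65 := by nlinarith [sq_nonneg (θ+28)]
    nlinarith [mul_nonneg (by linarith : (0:ℝ) ≤ -(θ+28)) h65]
  have ht28 : (-28:ℝ) < t := lt_trans hθ28 htθ
  have hu : (0:ℝ) < -(13+t) := by linarith
  have h28 : (0:ℝ) ≤ t + 28 := by linarith
  have h2t : (0:ℝ) ≤ 2 - t := by linarith
  -- radicand positive
  have hqpos : (0:ℝ) < t^2 + 11*t + 46 := by nlinarith [sq_nonneg (2*t+11)]
  have hD : 3 * (506 + 75 * t - t ^ 3) > 0 := by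
    nlinarith [mul_pos (by linarith : (0:ℝ) < 11 - t) hqpos]
  -- cubic factor positive
  have hc : (0:ℝ) < -1763 + 75 * t + 111 * t ^ 2 + t ^ 3 := by
    nlinarith [mul_nonneg (mul_nonneg hu.le hu.le) h28, mul_pos hu hu, hu]
  -- q5 negative
  have hsq13 : (0:ℝ) < (13+t)^2 := by nlinarith [sq_nonneg (t+13)]
  have h2pos : (0:ℝ) < (t-11)^2 := by nlinarith [sq_nonneg (t+13)]
  have h5neg : (13+t)^5 < 0 := by
    have h4 : (0:ℝ) < (13+t)^4 := by
      rw [show ((13:ℝ)+t)^4 = ((13+t)^2)^2 by ring]; exact pow_pos hsq13 2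
    calc (13+t)^5 = (13+t)^4 * (13+t) := by ring
    _ < 0 := mul_neg_of_pos_of_neg h4 (by linarith)
  have hq5 : q5 t < 0 := by
    unfold q5
    exact mul_neg_of_neg_of_pos (mul_neg_of_pos_of_neg h2pos h5neg) hc
  have h4pos : (0:ℝ) < (13+t)^4 := by
    rw [show ((13:ℝ)+t)^4 = ((13+t)^2)^2 by ring]; exact pow_pos hsq13 2
  have h11 : t - 11 < 0 := by linarith
  -- powers of u
  have p2 := pow_pos hu 2
  have p3 := pow_pos hu 3
  have p4 := pow_pos hu 4
  have p5 := pow_pos hu 5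
  have p6 := pow_pos hu 6
  have p7 := pow_pos hu 7
  have p8 := pow_pos hu 8
  have p9 := pow_pos hu 9
  have p10 := pow_pos hu 10
  have p11 := pow_pos hu 11
  have p12 := pow_pos hu 12
  -- p2's negative
  have hpa2 : pa2 t < 0 := by
    unfold pa2
    linarith [hu, p2, p3, p4, p5, p6, p7, p8]
  have hpb2 : pb2 t < 0 := by
    unfold pb2
    linarith [hu, p2, p3, p4, p5]
  have hps2 : ps2 t < 0 := by
    unfold ps2
    linarith [hu, p2, p3, p4, p5, p6, p7, p8]
  -- cofactor r negative
  have h15a : (0:ℝ) ≤ 225 + 15*(-(13+t)) + (-(13+t))^2 := by nlinarith [p2, hu]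
  have ha9 : (0:ℝ) ≤ (-(13+t))^7 * (t+28) * (2-t) :=
    mul_nonneg (mul_nonneg (pow_nonneg hu.le 7) h28) h2t
  have ha10 : (0:ℝ) ≤ (-(13+t))^7 * (t+28) * (225 + 15*(-(13+t)) + (-(13+t))^2) :=
    mul_nonneg (mul_nonneg (pow_nonneg hu.le 7) h28) h15a
  have hb7 : (0:ℝ) ≤ (-(13+t))^5 * (t+28) * (2-t) :=
    mul_nonneg (mul_nonneg (pow_nonneg hu.le 5) h28) h2t
  have hb8 : (0:ℝ) ≤ (-(13+t))^5 * (t+28) * (225 + 15*(-(13+t)) + (-(13+t))^2) :=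
    mul_nonneg (mul_nonneg (pow_nonneg hu.le 5) h28) h15a
  have hb9 : (0:ℝ) ≤ (-(13+t))^5 * (t+28) * (2-t) * (225 + (-(13+t))^2) :=
    mul_nonneg hb7 (by nlinarith [p2])
  have ha11 : (0:ℝ) ≤ (-(13+t))^10 * (t+28) :=
    mul_nonneg (pow_nonneg hu.le 10) h28
  have hra : (-11243366790769) + (-1414302826044)*t + (1165440897006)*t^2 + (225646565396)*t^3 + (-38213311311)*t^4 + (-11448834552)*t^5 + (152423364)*t^6 + (231859656)*t^7 + (11635425)*t^8 + (-1600204)*t^9 + (-138450)*t^10 + (-732)*t^11 + (-1)*t^12 < 0 := by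
    linarith [hu, p2, p3, p4, p5, p6, p7, p8, p9, p10, p12, ha11]
  have hrb : (-12666715895089) + (-4705312112508)*t + (-1149454053714)*t^2 + (-215500680364)*t^3 + (-23010412239)*t^4 + (-2438112888)*t^5 + (-177690300)*t^6 + (-8874936)*t^7 + (-2141919)*t^8 + (30452)*t^9 + (-5394)*t^10 + (-156)*t^11 + (-1)*t^12 < 0 := by
    linarith [hu, p2, p3, p4, p5, p6, p7, p8, p12, ha9, ha10]
  have hrs : (-110168346124321) + (-31918967442108)*t + (-509507666610)*t^2 + (1830406334996)*t^3 + (381497782689)*t^4 + (35375968008)*t^5 + (-2790590460)*t^6 + (-1277449272)*t^7 + (-240229359)*t^8 + (-21928780)*t^9 + (-1781874)*t^10 + (-59100)*t^11 + (-625)*t^12 < 0 := by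
    linarith [hu, p2, p3, p4, p5, p6, p8, p9, p10, p11, p12, hb7, hb8, hb9]
  -- the square comparisons
  have hGa : pa2 t ^ 2 * (3 * (506 + 75 * t - t ^ 3)) - pa1 t ^ 2 > 0 := by
    have hf := mul_pos (mul_pos h4pos hc) (mul_pos_of_neg_of_neg h11 hra)
    unfold pa1 pa2
    linarith [hf]
  have hGb : pb2 t ^ 2 * (3 * (506 + 75 * t - t ^ 3)) - pb1 t ^ 2 > 0 := by
    have hf := mul_pos (mul_pos h4pos hc) (mul_pos_of_neg_of_neg h11 hrb)
    unfold pb1 pb2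
    linarith [hf]
  have hGs : ps2 t ^ 2 * (3 * (506 + 75 * t - t ^ 3)) - ps1 t ^ 2 > 0 := by
    have hf := mul_pos (mul_pos h4pos hc) (mul_pos_of_neg_of_neg h11 hrs)
    unfold ps1 ps2
    linarith [hf]
  -- ω facts
  have hω0 : 0 ≤ ω t := Real.sqrt_nonneg _
  have hω2 : ω t ^ 2 = 3 * (506 + 75 * t - t ^ 3) := Real.sq_sqrt hD.le
  -- numerators negative
  have key : ∀ P1 P2 : ℝ, P2 < 0 → P2 ^ 2 * (3 * (506 + 75 * t - t ^ 3)) - P1 ^ 2 > 0 →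
      P1 + P2 * ω t < 0 := by
    intro P1 P2 hP2 hG
    by_contra hcon
    push_neg at hcon
    have hw : 0 ≤ -(P2 * ω t) := by
      have := mul_nonneg (neg_nonneg.mpr hP2.le) hω0
      linarith [this]
    have h2' : 0 ≤ P1 - P2 * ω t := by linarith
    have h3 : 0 ≤ (P1 + P2 * ω t) * (P1 - P2 * ω t) := mul_nonneg hcon h2'
    have h4 : (P1 + P2 * ω t) * (P1 - P2 * ω t) = P1 ^ 2 - P2 ^ 2 * (ω t ^ 2) := by ring
    rw [h4, hω2] at h3
    linarith
  have hNa : pa1 t + pa2 t * ω t < 0 := key _ _ hpa2 hGa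
  have hNb : pb1 t + pb2 t * ω t < 0 := key _ _ hpb2 hGb
  have hNs : ps1 t + ps2 t * ω t < 0 := key _ _ hps2 hGs
  have hQa : (pa1 t + pa2 t * ω t) / q5 t > 0 := div_pos_of_neg_of_neg hNa hq5
  have hQb : (pb1 t + pb2 t * ω t) / q5 t > 0 := div_pos_of_neg_of_neg hNb hq5
  have hQs : (ps1 t + ps2 t * ω t) / q5 t > 0 := div_pos_of_neg_of_neg hNs hq5
  refine ⟨hD, hq5, hQa, hQb, hQs, ?_, ?_, ?_⟩
  · exact Real.sqrt_pos.mpr hQa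
  · exact Real.sqrt_pos.mpr hQb
  · unfold s
    exact mul_pos (by norm_num) (Real.sqrt_pos.mpr hQs)
end
end

section
/- For every real number t in the open interval I = (θ, −13), one has Q3(α(t), t) = 0, where Q3(a, t) = (11243366790769 + 1414302826044t − 1165440897006t^2 − 225646565396t^3 + 38213311311t^4 + 11448834552t^5 − 152423364t^6 − 231859656t^7 − 11635425t^8 + 1600204t^9 + 138450t^10 + 732t^11 + t^12) + a^2·(−22569735604130 − 3071056384440t + 2108952113820t^2 + 410418431848t^3 − 47150209566t^4 − 15418665072t^5 − 125813496t^6 + 206967312t^7 + 7843842t^8 − 1161176t^9 − 36324t^10 + 2184t^11 − 2t^12) + a^4·(11326363139377 + 1656707880828t − 943672290990t^2 − 185096942420t^3 + 8526067407t^4 + 3636819576t^5 + 109344444t^6 − 23639112t^7 − 1673505t^8 + 24844t^9 + 5394t^10 + 156t^11 + t^12). -/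
noncomputable section

/-- The bivariate polynomial Q₃(a, t). -/
def Q3 (a t : ℝ) : ℝ :=
  (11243366790769 + 1414302826044 * t - 1165440897006 * t ^ 2 - 225646565396 * t ^ 3 +
      38213311311 * t ^ 4 + 11448834552 * t ^ 5 - 152423364 * t ^ 6 - 231859656 * t ^ 7 -
      11635425 * t ^ 8 + 1600204 * t ^ 9 + 138450 * t ^ 10 + 732 * t ^ 11 + t ^ 12) +
  a ^ 2 * (-22569735604130 - 3071056384440 * t + 2108952113820 * t ^ 2 +
      410418431848 * t ^ 3 - 47150209566 * t ^ 4 - 15418665072 * t ^ 5 -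
      125813496 * t ^ 6 + 206967312 * t ^ 7 + 7843842 * t ^ 8 - 1161176 * t ^ 9 -
      36324 * t ^ 10 + 2184 * t ^ 11 - 2 * t ^ 12) +
  a ^ 4 * (11326363139377 + 1656707880828 * t - 943672290990 * t ^ 2 -
      185096942420 * t ^ 3 + 8526067407 * t ^ 4 + 3636819576 * t ^ 5 +
      109344444 * t ^ 6 - 23639112 * t ^ 7 - 1673505 * t ^ 8 + 24844 * t ^ 9 +
      5394 * t ^ 10 + 156 * t ^ 11 + t ^ 12)

set_option maxHeartbeats 2000000 in
/-- for every t ∈ I = (θ, −13) one has Q₃(α(t), t) = 0. -/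
theorem stmt2 (θ : ℝ)
    (hθroot : θ ^ 3 + 27 * θ ^ 2 - 93 * θ - 1847 = 0)
    (hθmin : ∀ x : ℝ, x ^ 3 + 27 * x ^ 2 - 93 * x - 1847 = 0 → θ ≤ x) :
    ∀ t ∈ Set.Ioo θ (-13 : ℝ), Q3 (α t) t = 0 := by
  intro t ht
  obtain ⟨ht1, ht2⟩ := ht
  have hθ : (-28:ℝ) < θ := by
    by_contra hcon
    push_neg at hcon
    nlinarith [hθroot, sq_nonneg (θ + 28), sq_nonneg θ]
  have h1 : (0:ℝ) < t + 28 := by linarith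
  have h2 : (0:ℝ) < -13 - t := by linarith
  have h_W : (0:ℝ) < 1518 + 225*t + (-3)*t^3 := by
    have hid : (3375:ℝ) * (1518 + 225*t + (-3)*t^3) = (61074:ℝ) * (t+28)^0 * (-13-t)^3 + (80757:ℝ) * (t+28)^1 * (-13-t)^2 + (34992:ℝ) * (t+28)^2 * (-13-t)^1 + (5184:ℝ) * (t+28)^3 * (-13-t)^0 := by ring
    linarith [mul_pos (mul_pos (show (0:ℝ) < 61074 by norm_num) (pow_pos h1 0)) (pow_pos h2 3), mul_pos (mul_pos (show (0:ℝ) < 80757 by norm_num) (pow_pos h1 1)) (pow_pos h2 2), mul_pos (mul_pos (show (0:ℝ) < 34992 by norm_num) (pow_pos h1 2)) (pow_pos h2 1), mul_pos (mul_pos (show (0:ℝ) < 5184 by norm_num) (pow_pos h1 3)) (pow_pos h2 0)]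
  have h_c3 : (0:ℝ) < (-1763) + 75*t + 111*t^2 + 1*t^3 := by
    have hid : (3375:ℝ) * ((-1763) + 75*t + 111*t^2 + 1*t^3) = (61209:ℝ) * (t+28)^0 * (-13-t)^3 + (126792:ℝ) * (t+28)^1 * (-13-t)^2 + (76032:ℝ) * (t+28)^2 * (-13-t)^1 + (13824:ℝ) * (t+28)^3 * (-13-t)^0 := by ring
    linarith [mul_pos (mul_pos (show (0:ℝ) < 61209 by norm_num) (pow_pos h1 0)) (pow_pos h2 3), mul_pos (mul_pos (show (0:ℝ) < 126792 by norm_num) (pow_pos h1 1)) (pow_pos h2 2), mul_pos (mul_pos (show (0:ℝ) < 76032 by norm_num) (pow_pos h1 2)) (pow_pos h2 1), mul_pos (mul_pos (show (0:ℝ) < 13824 by norm_num) (pow_pos h1 3)) (pow_pos h2 0)]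
  have h_p8 : (0:ℝ) < (-237047) + (-688048)*t + (-631196)*t^2 + (-136576)*t^3 + 52510*t^4 + 7760*t^5 + (-1292)*t^6 + (-160)*t^7 + 1*t^8 := by
    have hid : (2562890625:ℝ) * ((-237047) + (-688048)*t + (-631196)*t^2 + (-136576)*t^3 + 52510*t^4 + 7760*t^5 + (-1292)*t^6 + (-160)*t^7 + 1*t^8) = (1815313705353:ℝ) * (t+28)^0 * (-13-t)^8 + (7093092008664:ℝ) * (t+28)^1 * (-13-t)^7 + (11864333877264:ℝ) * (t+28)^2 * (-13-t)^6 + (11118334425408:ℝ) * (t+28)^3 * (-13-t)^5 + (6392971215360:ℝ) * (t+28)^4 * (-13-t)^4 + (2311400199168:ℝ) * (t+28)^5 * (-13-t)^3 + (513398145024:ℝ) * (t+28)^6 * (-13-t)^2 + (64067272704:ℝ) * (t+28)^7 * (-13-t)^1 + (3439853568:ℝ) * (t+28)^8 * (-13-t)^0 := by ring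
    linarith [mul_pos (mul_pos (show (0:ℝ) < 1815313705353 by norm_num) (pow_pos h1 0)) (pow_pos h2 8), mul_pos (mul_pos (show (0:ℝ) < 7093092008664 by norm_num) (pow_pos h1 1)) (pow_pos h2 7), mul_pos (mul_pos (show (0:ℝ) < 11864333877264 by norm_num) (pow_pos h1 2)) (pow_pos h2 6), mul_pos (mul_pos (show (0:ℝ) < 11118334425408 by norm_num) (pow_pos h1 3)) (pow_pos h2 5), mul_pos (mul_pos (show (0:ℝ) < 6392971215360 by norm_num) (pow_pos h1 4)) (pow_pos h2 4), mul_pos (mul_pos (show (0:ℝ) < 2311400199168 by norm_num) (pow_pos h1 5)) (pow_pos h2 3), mul_pos (mul_pos (show (0:ℝ) < 513398145024 by norm_num) (pow_pos h1 6)) (pow_pos h2 2), mul_pos (mul_pos (show (0:ℝ) < 64067272704 by norm_num) (pow_pos h1 7)) (pow_pos h2 1), mul_pos (mul_pos (show (0:ℝ) < 3439853568 by norm_num) (pow_pos h1 8)) (pow_pos h2 0)]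
  have h_D : (0:ℝ) < (-6227515046283998060737) + (-1868454221360592259316)*t + 911646477549138750146*t^2 + 387391511464688190252*t^3 + (-24474872610340086765)*t^4 + (-28418005763159768592)*t^5 + (-2200654334788533096)*t^6 + 854180247660283824*t^7 + 155111769102691182*t^8 + (-5692941885088856)*t^9 + (-3459488675634868)*t^10 + (-201258717175640)*t^11 + 24839268121326*t^12 + 3585971521968*t^13 + 75248693400*t^14 + (-12476524560)*t^15 + (-968032173)*t^16 + (-26402388)*t^17 + (-254782)*t^18 + (-884)*t^19 + (-1)*t^20 := by
    have hid : (332525673007965087890625:ℝ) * ((-6227515046283998060737) + (-1868454221360592259316)*t + 911646477549138750146*t^2 + 387391511464688190252*t^3 + (-24474872610340086765)*t^4 + (-28418005763159768592)*t^5 + (-2200654334788533096)*t^6 + 854180247660283824*t^7 + 155111769102691182*t^8 + (-5692941885088856)*t^9 + (-3459488675634868)*t^10 + (-201258717175640)*t^11 + 24839268121326*t^12 + 3585971521968*t^13 + 75248693400*t^14 + (-12476524560)*t^15 + (-968032173)*t^16 + (-26402388)*t^17 + (-254782)*t^18 + (-884)*t^19 + (-1)*t^20) = (2022019410903858226387437519375:ℝ)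 * (t+28)^0 * (-13-t)^20 + (18098397501400655665037302410000:ℝ) * (t+28)^1 * (-13-t)^19 + (74714056713761648967189916200000:ℝ) * (t+28)^2 * (-13-t)^18 + (188951708252955063259716249600000:ℝ) * (t+28)^3 * (-13-t)^17 + (327876181714590190246245427200000:ℝ) * (t+28)^4 * (-13-t)^16 + (414220864366652835767691386880000:ℝ) * (t+28)^5 * (-13-t)^15 + (394385246831168395701865390080000:ℝ) * (t+28)^6 * (-13-t)^14 + (288869712745081394415314534400000:ℝ) * (t+28)^7 * (-13-t)^13 + (164608702212616747290604339200000:ℝ) * (t+28)^8 * (-13-t)^12 + (73264382628351994612835942400000:ℝ) * (t+28)^9 * (-13-t)^11 + (25400406706276096214858465280000:ℝ) * (t+28)^10 * (-13-t)^10 + (6791330710086086221816135680000:ℝ) * (t+28)^11 * (-13-t)^9 + (1373532452292181605167923200000:ℝ) * (t+28)^12 * (-13-t)^8 + (203239447943367349606809600000:ℝ) * (t+28)^13 * (-13-t)^7 + (20759211334104257868595200000:ℝ) * (t+28)^14 * (-13-t)^6 + (1308270597422700885442560000:ℝ) * (t+28)^15 * (-13-t)^5 + (38337599924474751221760000:ℝ)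 * (t+28)^16 * (-13-t)^4 := by ring
    linarith [mul_pos (mul_pos (show (0:ℝ) < 2022019410903858226387437519375 by norm_num) (pow_pos h1 0)) (pow_pos h2 20), mul_pos (mul_pos (show (0:ℝ) < 18098397501400655665037302410000 by norm_num) (pow_pos h1 1)) (pow_pos h2 19), mul_pos (mul_pos (show (0:ℝ) < 74714056713761648967189916200000 by norm_num) (pow_pos h1 2)) (pow_pos h2 18), mul_pos (mul_pos (show (0:ℝ) < 188951708252955063259716249600000 by norm_num) (pow_pos h1 3)) (pow_pos h2 17), mul_pos (mul_pos (show (0:ℝ) < 327876181714590190246245427200000 by norm_num) (pow_pos h1 4)) (pow_pos h2 16), mul_pos (mul_pos (show (0:ℝ) < 414220864366652835767691386880000 by norm_num) (pow_pos h1 5)) (pow_pos h2 15), mul_pos (mul_pos (show (0:ℝ) < 394385246831168395701865390080000 by norm_num) (pow_pos h1 6)) (pow_pos h2 14), mul_pos (mul_pos (show (0:ℝ) < 288869712745081394415314534400000 by norm_num) (pow_pos h1 7)) (pow_pos h2 13), mul_pos (mul_pos (show (0:ℝ) < 164608702212616747290604339200000 by norm_num) (pow_pos h1 8)) (pow_pos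 h2 12), mul_pos (mul_pos (show (0:ℝ) < 73264382628351994612835942400000 by norm_num) (pow_pos h1 9)) (pow_pos h2 11), mul_pos (mul_pos (show (0:ℝ) < 25400406706276096214858465280000 by norm_num) (pow_pos h1 10)) (pow_pos h2 10), mul_pos (mul_pos (show (0:ℝ) < 6791330710086086221816135680000 by norm_num) (pow_pos h1 11)) (pow_pos h2 9), mul_pos (mul_pos (show (0:ℝ) < 1373532452292181605167923200000 by norm_num) (pow_pos h1 12)) (pow_pos h2 8), mul_pos (mul_pos (show (0:ℝ) < 203239447943367349606809600000 by norm_num) (pow_pos h1 13)) (pow_pos h2 7), mul_pos (mul_pos (show (0:ℝ) < 20759211334104257868595200000 by norm_num) (pow_pos h1 14)) (pow_pos h2 6), mul_pos (mul_pos (show (0:ℝ) < 1308270597422700885442560000 by norm_num) (pow_pos h1 15)) (pow_pos h2 5), mul_pos (mul_pos (show (0:ℝ) < 38337599924474751221760000 by norm_num) (pow_pos h1 16)) (pow_pos h2 4)]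
  have hWnn : (0:ℝ) ≤ 3 * (506 + 75 * t - t ^ 3) := by nlinarith [h_W]
  have hω2 : ω t ^ 2 = 3 * (506 + 75 * t - t ^ 3) := Real.sq_sqrt hWnn
  have hωnn : 0 ≤ ω t := Real.sqrt_nonneg _
  have hpa2 : pa2 t ≤ 0 := by unfold pa2; nlinarith [h_p8]
  have hD : pa1 t ^ 2 ≤ pa2 t ^ 2 * (3 * (506 + 75 * t - t ^ 3)) := by
    unfold pa1 pa2; nlinarith [h_D]
  have hnum : pa1 t + pa2 t * ω t ≤ 0 := by
    nlinarith [hD, hω2, hωnn, hpa2, mul_nonneg (neg_nonneg.2 hpa2) hωnn,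
      sq_nonneg (pa1 t + pa2 t * ω t), sq_nonneg (pa1 t - pa2 t * ω t)]
  have hq5 : q5 t < 0 := by
    have h11 : (0:ℝ) < 11 - t := by linarith
    have e1 : (0:ℝ) < (t - 11) ^ 2 := by nlinarith [pow_pos h11 2]
    have e2 : (13 + t) ^ 5 < 0 := by nlinarith [pow_pos h2 5]
    have e3 : (0:ℝ) < -1763 + 75 * t + 111 * t ^ 2 + t ^ 3 := by nlinarith [h_c3]
    unfold q5
    nlinarith [mul_neg_of_pos_of_neg (mul_pos e1 e3) e2]
  have hq5ne : q5 t ≠ 0 := ne_of_lt hq5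
  have hr : 0 ≤ (pa1 t + pa2 t * ω t) / q5 t := div_nonneg_iff.mpr (Or.inr ⟨hnum, hq5.le⟩)
  have hα2 : α t ^ 2 = (pa1 t + pa2 t * ω t) / q5 t := Real.sq_sqrt hr
  have key : (11243366790769 + 1414302826044 * t - 1165440897006 * t ^ 2 - 225646565396 * t ^ 3 + 38213311311 * t ^ 4 + 11448834552 * t ^ 5 - 152423364 * t ^ 6 - 231859656 * t ^ 7 - 11635425 * t ^ 8 + 1600204 * t ^ 9 + 138450 * t ^ 10 + 732 * t ^ 11 + t ^ 12) * q5 t ^ 2 + (-22569735604130 - 3071056384440 * t + 2108952113820 * t ^ 2 + 410418431848 * t ^ 3 - 47150209566 * t ^ 4 - 15418665072 * t ^ 5 - 125813496 * t ^ 6 + 206967312 * t ^ 7 + 7843842 * t ^ 8 - 1161176 * t ^ 9 - 36324 * t ^ 10 + 2184 * t ^ 11 - 2 * t ^ 12) * ((pa1 t + pa2 t * ω t) * q5 t) +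
      (11326363139377 + 1656707880828 * t - 943672290990 * t ^ 2 - 185096942420 * t ^ 3 + 8526067407 * t ^ 4 + 3636819576 * t ^ 5 + 109344444 * t ^ 6 - 23639112 * t ^ 7 - 1673505 * t ^ 8 + 24844 * t ^ 9 + 5394 * t ^ 10 + 156 * t ^ 11 + t ^ 12) * (pa1 t + pa2 t * ω t) ^ 2 = 0 := by
    unfold pa1 pa2 q5
    linear_combination ((11326363139377 + 1656707880828 * t - 943672290990 * t ^ 2 - 185096942420 * t ^ 3 + 8526067407 * t ^ 4 + 3636819576 * t ^ 5 + 109344444 * t ^ 6 - 23639112 * t ^ 7 - 1673505 * t ^ 8 + 24844 * t ^ 9 + 5394 * t ^ 10 + 156 * t ^ 11 + t ^ 12) * (-32 * (-237047 - 688048 * t - 631196 * t ^ 2 - 136576 * t ^ 3 + 52510 * t ^ 4 + 7760 * t ^ 5 - 1292 * t ^ 6 - 160 * t ^ 7 + t ^ 8)) ^ 2) * hω2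
  unfold Q3
  rw [show α t ^ 4 = (α t ^ 2) ^ 2 by ring, hα2]
  field_simp
  linear_combination key
end
end
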